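/- Let I be a zero-dimensional radical ideal of R = ℂ[x₁,…,xₙ]. Then the zero locus V(I) is a finite set, and for every polynomial p ∈ R the sum of the evaluations of p over the points of V(I) equals the trace of the ℂ-linear endomorphism mul(p) of R/I given by multiplication by the class of p: ∑_{z ∈ V(I)} p(z) = Tr(mul(p)). In particular, applying this with p = any polynomial expression in x₁,…,xₙ, the sum of p over the roots of I equals Tr(p(T₁,…,Tₙ)) for the companion endomorphisms T_i. -/

import Mathlib

/-- For a zero-dimensional radical ideal `I` of `ℂ[x₁,…,xₙ]`, the zero locus
`V(I)` is finite, and for every polynomial `p` the sum of the evaluations of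
`p` over the points of `V(I)` equals the trace of the multiplication
endomorphism `mul(p)` of `R ⧸ I`. -/
theorem sum_over_roots_eq_trace_mul
    (n : ℕ) (I : Ideal (MvPolynomial (Fin n) ℂ))
    (hfd : FiniteDimensional ℂ (MvPolynomial (Fin n) ℂ ⧸ I))
    (hrad : I.IsRadical) :
    {z : Fin n → ℂ | ∀ g ∈ I, MvPolynomial.eval z g = 0}.Finite ∧
      ∀ p : MvPolynomial (Fin n) ℂ,
        (∑ᶠ z ∈ {z : Fin n → ℂ | ∀ g ∈ I, MvPolynomial.eval z g = 0},
            MvPolynomial.eval z p)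
          = LinearMap.trace ℂ (MvPolynomial (Fin n) ℂ ⧸ I)
              (LinearMap.mulLeft ℂ (Ideal.Quotient.mk I p)) := by
  classical
  set R := MvPolynomial (Fin n) ℂ with hR
  set A := R ⧸ I with hA
  set V : Set (Fin n → ℂ) := {z : Fin n → ℂ | ∀ g ∈ I, MvPolynomial.eval z g = 0} with hV
  -- aeval = eval over ℂ
  have haev : ∀ (z : Fin n → ℂ) (p : R), MvPolynomial.aeval z p = MvPolynomial.eval z p := by
    intro z p
    exact congrFun (congrArg (fun f => (DFunLike.coe f : R → ℂ))
      (MvPolynomial.coe_aeval_eq_eval (f := z))) p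
  -- characters attached to points of V
  have hker : ∀ z : V, ∀ a ∈ I, MvPolynomial.aeval (z : Fin n → ℂ) a = 0 := by
    intro z a ha
    rw [haev]
    exact z.2 a ha
  let χ : V → (A →ₐ[ℂ] ℂ) := fun z =>
    Ideal.Quotient.liftₐ I (MvPolynomial.aeval (z : Fin n → ℂ)) (hker z)
  have hχ : ∀ (z : V) (p : R), χ z (Ideal.Quotient.mk I p) = MvPolynomial.eval (z : Fin n → ℂ) p := by
    intro z p
    exact haev z p
  have hχinj : Function.Injective χ := by
    intro z w h
    ext i
    have := congrArg (fun f : A →ₐ[ℂ] ℂ => f (Ideal.Quotient.mk I (MvPolynomial.X i))) h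
    simpa [hχ] using this
  have hfinV : V.Finite := by
    have : Finite (A →ₐ[ℂ] ℂ) := inferInstance
    have : Finite V := Finite.of_injective χ hχinj
    exact Set.toFinite V
  refine ⟨hfinV, ?_⟩
  haveI : Finite V := hfinV
  haveI : Fintype V := hfinV.fintype
  -- cardinality bound from linear independence of characters
  have hcard : Fintype.card V ≤ Module.finrank ℂ A := by
    calc Fintype.card V ≤ Nat.card (A →ₐ[ℂ] ℂ) := by
          rw [← Nat.card_eq_fintype_card]
          exact Nat.card_le_card_of_injective χ hχinj
      _ ≤ Module.finrank ℂ A := card_algHom_le_finrank ℂ A ℂ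
  -- the evaluation algebra hom into functions on V
  let Φ : A →ₐ[ℂ] (V → ℂ) := Pi.algHom ℂ _ χ
  have hΦinj : Function.Injective Φ := by
    rw [injective_iff_map_eq_zero]
    intro a ha
    obtain ⟨p, rfl⟩ := Ideal.Quotient.mk_surjective a
    have hpV : ∀ z ∈ V, MvPolynomial.eval z p = 0 := by
      intro z hz
      have := congrFun ha ⟨z, hz⟩
      simpa [Φ, hχ] using this
    have hpI : p ∈ I := by
      have h1 : p ∈ MvPolynomial.vanishingIdeal ℂ V := by
        rw [MvPolynomial.mem_vanishingIdeal_iff]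
        exact hpV
      have h2 : MvPolynomial.vanishingIdeal ℂ V = I.radical := by
        have : V = MvPolynomial.zeroLocus ℂ I := rfl
        rw [this, MvPolynomial.vanishingIdeal_zeroLocus_eq_radical]
      rw [h2, hrad.radical] at h1
      exact h1
    exact Ideal.Quotient.eq_zero_iff_mem.2 hpI
  have hrank : Module.finrank ℂ A = Module.finrank ℂ (V → ℂ) := by
    have hle : Module.finrank ℂ A ≤ Module.finrank ℂ (V → ℂ) :=
      LinearMap.finrank_le_finrank_of_injective (f := Φ.toLinearMap) hΦinj
    have : Module.finrank ℂ (V → ℂ) = Fintype.card V := by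
      simp [Module.finrank_pi]
    omega
  have hΦsurj : Function.Surjective Φ := by
    have := (LinearMap.injective_iff_surjective_of_finrank_eq_finrank
      (f := Φ.toLinearMap) hrank).mp hΦinj
    exact this
  let e : A ≃ₐ[ℂ] (V → ℂ) := AlgEquiv.ofBijective Φ ⟨hΦinj, hΦsurj⟩
  intro p
  -- trace of multiplication on functions
  have htr : ∀ f : V → ℂ,
      LinearMap.trace ℂ (V → ℂ) (LinearMap.mulLeft ℂ f) = ∑ z : V, f z := by
    intro f
    rw [LinearMap.trace_eq_matrix_trace ℂ (Pi.basisFun ℂ V)]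
    rw [Matrix.trace]
    congr 1
    funext z
    simp [Matrix.diag, LinearMap.toMatrix_apply, LinearMap.mulLeft_apply,
      Pi.basisFun_apply, Pi.basisFun_repr]
  -- transfer the trace through the equivalence
  have hconj : (e.toLinearEquiv.conj (LinearMap.mulLeft ℂ (Ideal.Quotient.mk I p)))
      = LinearMap.mulLeft ℂ (e (Ideal.Quotient.mk I p)) := by
    apply LinearMap.ext
    intro x
    simp only [LinearEquiv.conj_apply, LinearMap.comp_apply, LinearEquiv.coe_coe,
      LinearMap.mulLeft_apply, AlgEquiv.toLinearEquiv_apply, AlgEquiv.toLinearEquiv_symm]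
    rw [map_mul]
    congr 1
    exact e.apply_symm_apply x
  have htrace : LinearMap.trace ℂ A (LinearMap.mulLeft ℂ (Ideal.Quotient.mk I p))
      = ∑ z : V, MvPolynomial.eval (z : Fin n → ℂ) p := by
    rw [← LinearMap.trace_conj' (LinearMap.mulLeft ℂ (Ideal.Quotient.mk I p)) e.toLinearEquiv,
      hconj, htr]
    apply Finset.sum_congr rfl
    intro z _
    show Φ (Ideal.Quotient.mk I p) z = _
    simp [Φ, hχ]
  rw [htrace, finsum_mem_eq_finite_toFinset_sum _ hfinV,
    Finset.sum_subtype hfinV.toFinset (fun x => hfinV.mem_toFinset) (fun z => MvPolynomial.eval z p)]
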